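/- Let x be a non-uniform lattice of either class and ν ∈ ℝ. Suppose ρ̃_ν satisfies the Pearson-type equation Δ(σ·ρ̃_ν)(z) = τ_ν(z)·ρ̃_ν(z)·∇x_{ν+1}(z) for all z ∈ ℂ, and ρ_ν satisfies the adjoint Pearson-type equation ∇(σ·ρ_ν)(z) + τ_ν(z)·ρ_ν(z)·∇x_{ν+1}(z) = 0 for all z ∈ ℂ. Then the function F(z) := σ(z)·ρ̃_ν(z)·σ(z−1)·ρ_ν(z−1) satisfies F(z+1) = F(z) for all z ∈ ℂ; equivalently, ρ_ν(z)·σ(z)·σ(z+1)·ρ̃_ν(z+1) is independent of z under unit shifts, so that ρ_ν(z) = const/(σ(z)·σ(z+1)·ρ̃_ν(z+1)) wherever σ(z)·σ(z+1)·ρ̃_ν(z+1) ≠ 0. (Lemma 5.1) -/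
import Mathlib


noncomputable section

open Finset

/-- `x` is a non-uniform lattice of one of the two classes (q-quadratic with
`q = e^w`, or quadratic), together with its associated functions `α = a` and
`γ = g`. -/
def IsNonUniformLattice (w : ℂ) (x : ℂ → ℂ) (a g : ℝ → ℂ) : Prop :=
  (Complex.exp w ≠ 1 ∧
    ∃ c1 c2 c3 : ℂ, c1 * c2 ≠ 0 ∧
      (∀ s : ℂ, x s = c1 * Complex.exp (s * w) + c2 * Complex.exp (-(s * w)) + c3) ∧
      (∀ μ : ℝ, a μ =
        (Complex.exp ((μ : ℂ) / 2 * w) + Complex.exp (-((μ : ℂ) / 2 * w))) / 2) ∧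
      (∀ μ : ℝ, g μ =
        (Complex.exp ((μ : ℂ) / 2 * w) - Complex.exp (-((μ : ℂ) / 2 * w))) /
          (Complex.exp ((1 : ℂ) / 2 * w) - Complex.exp (-((1 : ℂ) / 2 * w))))) ∨
  (∃ c1 c2 c3 : ℂ, c1 ≠ 0 ∧
    (∀ s : ℂ, x s = c1 * s ^ 2 + c2 * s + c3) ∧
    (∀ μ : ℝ, a μ = 1) ∧ (∀ μ : ℝ, g μ = (μ : ℂ)))

/-- `xl x ν s = x_ν(s) = x (s + ν/2)`. -/
def xl (x : ℂ → ℂ) (ν : ℝ) (s : ℂ) : ℂ := x (s + (ν : ℂ) / 2)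

/-- `σ(z) = σ̃(x z) - (1/2)·τ̃(x z)·∇x₁(z)`. -/
def sig (x : ℂ → ℂ) (st tt : Polynomial ℂ) (z : ℂ) : ℂ :=
  st.eval (x z) - (1 / 2) * tt.eval (x z) * (xl x 1 z - xl x 1 (z - 1))

/-- `κ_ν = α(ν-1)·τ̃' + (1/2)·γ(ν-1)·σ̃''`. -/
def kap (a g : ℝ → ℂ) (st tt : Polynomial ℂ) (ν : ℝ) : ℂ :=
  a (ν - 1) * tt.coeff 1 + (1 / 2) * g (ν - 1) * (2 * st.coeff 2)

/-- Backward difference quotient `∇_ν f (z) = ∇f(z)/∇x_ν(z)`. -/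
def nab (x : ℂ → ℂ) (ν : ℝ) (f : ℂ → ℂ) (z : ℂ) : ℂ :=
  (f z - f (z - 1)) / (xl x ν z - xl x ν (z - 1))

/-- Forward difference quotient `Δ_ν f (z) = Δf(z)/Δx_ν(z)`. -/
def del (x : ℂ → ℂ) (ν : ℝ) (f : ℂ → ℂ) (z : ℂ) : ℂ :=
  (f (z + 1) - f z) / (xl x ν (z + 1) - xl x ν z)

/-- Generalized power `[x_α(s) - x_α(z)]^{(m)} = ∏_{k=0}^{m-1} (x_α(s) - x_α(z-k))`. -/
def gp (x : ℂ → ℂ) (m : ℕ) (al : ℝ) (s z : ℂ) : ℂ :=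
  ∏ k ∈ Finset.range m, (xl x al s - xl x al (z - (k : ℂ)))

/-- The defining relation for the family `τ_ν = T ν`:
`τ_ν(z)·∇x_{ν+1}(z) = σ(z+ν) - σ(z) + τ(z+ν)·∇x₁(z+ν)`. -/
def TauFamily (x : ℂ → ℂ) (st tt : Polynomial ℂ) (T : ℝ → ℂ → ℂ) : Prop :=
  ∀ (ν : ℝ) (z : ℂ),
    T ν z * (xl x (ν + 1) z - xl x (ν + 1) (z - 1)) =
      sig x st tt (z + (ν : ℂ)) - sig x st tt z +
        tt.eval (x (z + (ν : ℂ))) * (xl x 1 (z + (ν : ℂ)) - xl x 1 (z + (ν : ℂ) - 1))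

/-- Lemma 5.1. -/
theorem lem5_1
    (w : ℂ) (x : ℂ → ℂ) (a g : ℝ → ℂ)
    (hlat : IsNonUniformLattice w x a g)
    (st tt : Polynomial ℂ) (hst : st.degree ≤ 2) (htt : tt.degree ≤ 1)
    (T : ℝ → ℂ → ℂ) (hT : TauFamily x st tt T)
    (ν : ℝ) (ρt ρ : ℂ → ℂ)
    (hρt : ∀ z : ℂ, sig x st tt (z + 1) * ρt (z + 1) - sig x st tt z * ρt z =
      T ν z * ρt z * (xl x (ν + 1) z - xl x (ν + 1) (z - 1)))
    (hρ : ∀ z : ℂ, (sig x st tt z * ρ z - sig x st tt (z - 1) * ρ (z - 1)) +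
      T ν z * ρ z * (xl x (ν + 1) z - xl x (ν + 1) (z - 1)) = 0) :
    (∀ z : ℂ,
      sig x st tt (z + 1) * ρt (z + 1) * sig x st tt z * ρ z =
        sig x st tt z * ρt z * sig x st tt (z - 1) * ρ (z - 1)) ∧
    (∀ z : ℂ,
      ρ (z + 1) * (sig x st tt (z + 1) * sig x st tt (z + 2) * ρt (z + 2)) =
        ρ z * (sig x st tt z * sig x st tt (z + 1) * ρt (z + 1))) := by
  have h1 : ∀ z : ℂ,
      sig x st tt (z + 1) * ρt (z + 1) * sig x st tt z * ρ z =
        sig x st tt z * ρt z * sig x st tt (z - 1) * ρ (z - 1) := by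
    intro z
    linear_combination (sig x st tt z * ρ z) * hρt z + (sig x st tt z * ρt z) * hρ z
  refine ⟨h1, fun z => ?_⟩
  have h2 := h1 (z + 1)
  have e1 : z + 1 + 1 = z + 2 := by ring
  have e2 : z + 1 - 1 = z := by ring
  rw [e1, e2] at h2
  linear_combination h2
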